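/- Let Y₁, ..., Y_n be independent real-valued random variables with mean zero and finite expectation of absolute value. Then E[max_{1 ≤ k ≤ n} |Y_k|] ≤ 4 E[|∑_{k=1}^n Y_k|]. -/

import Mathlib

open MeasureTheory ProbabilityTheory

section Aux

variable {γ : Type*} [MeasurableSpace γ]

/-- marginal of a pi probability measure -/
lemma aux_map_eval_pi {ι : Type*} [Fintype ι] [DecidableEq ι] (μ : ι → Measure γ)
    [∀ i, IsProbabilityMeasure (μ i)] (k : ι) :
    Measure.map (fun a : ι → γ => a k) (Measure.pi μ) = μ k := by
  ext s hs
  rw [Measure.map_apply (measurable_pi_apply k) hs]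
  have h1 : (fun a : ι → γ => a k) ⁻¹' s = Set.univ.pi (fun j => if j = k then s else Set.univ) := by
    ext a
    simp only [Set.mem_preimage, Set.mem_pi, Set.mem_univ, true_implies]
    constructor
    · intro h j
      by_cases hj : j = k
      · subst hj; simpa using h
      · simp [hj]
    · intro h
      have := h k
      simpa using this
  rw [h1, Measure.pi_pi]
  rw [Finset.prod_eq_single_of_mem k (Finset.mem_univ k)]
  · simp
  · intro j _ hj
    simp [hj]

lemma aux_integrable_comp_of_map {α β : Type*} [MeasurableSpace α] [MeasurableSpace β]
    {μ : Measure α} {ν : Measure β} {g : α → β} (hg : Measurable g) (h : Measure.map g μ = ν)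
    {f : β → ℝ} (hf : AEStronglyMeasurable f ν) (hfi : Integrable f ν) :
    Integrable (fun a => f (g a)) μ := by
  have : Integrable (f ∘ g) μ := by
    refine (integrable_map_measure ?_ hg.aemeasurable).mp ?_
    · rwa [h]
    · rwa [h]
  exact this

lemma aux_integral_comp_of_map {α β : Type*} [MeasurableSpace α] [MeasurableSpace β]
    {μ : Measure α} {ν : Measure β} {g : α → β} (hg : Measurable g) (h : Measure.map g μ = ν)
    {f : β → ℝ} (hf : AEStronglyMeasurable f ν) :
    ∫ x, f (g x) ∂μ = ∫ y, f y ∂ν := by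
  subst h
  exact (integral_map hg.aemeasurable hf).symm

/-- lintegral of a product of coordinate functions over a pi probability measure -/
lemma aux_lintegral_pi_prod : ∀ (m : ℕ) (μ : Fin m → Measure γ),
    (∀ i, IsProbabilityMeasure (μ i)) → ∀ (g : Fin m → γ → ENNReal), (∀ i, Measurable (g i)) →
    ∫⁻ a, ∏ i, g i (a i) ∂Measure.pi μ = ∏ i, ∫⁻ x, g i x ∂(μ i) := by
  intro m
  induction m with
  | zero =>
    intro μ _ g hg
    rw [Measure.pi_of_empty]
    simp [lintegral_dirac]
  | succ m ih =>
    intro μ hμ g hg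
    haveI := hμ
    have hmp := (measurePreserving_piFinSuccAbove μ 0).symm
      (MeasurableEquiv.piFinSuccAbove (fun _ => γ) 0)
    have h1 : ∫⁻ a, ∏ i, g i (a i) ∂Measure.pi μ
        = ∫⁻ p : γ × (Fin m → γ), g 0 p.1 * ∏ i : Fin m, g (Fin.succAbove 0 i) (p.2 i)
            ∂((μ 0).prod (Measure.pi fun j => μ (Fin.succAbove 0 j))) := by
      rw [MeasurePreserving.lintegral_map_equiv (fun a => ∏ i, g i (a i))
        (MeasurableEquiv.piFinSuccAbove (fun _ => γ) 0).symm hmp]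
      refine lintegral_congr fun p => ?_
      have hE : ∀ i, ((MeasurableEquiv.piFinSuccAbove (fun _ => γ) 0).symm p) i =
          Fin.insertNth (α := fun _ => γ) 0 p.1 p.2 i := fun i => rfl
      have hstep := Fin.prod_univ_succAbove
        (fun i => g i (((MeasurableEquiv.piFinSuccAbove (fun _ => γ) 0).symm p) i)) 0
      rw [hstep]
      simp only [hE, Fin.insertNth_apply_same, Fin.insertNth_apply_succAbove]
    have h2 : ∫⁻ p : γ × (Fin m → γ), g 0 p.1 * ∏ i : Fin m, g (Fin.succAbove 0 i) (p.2 i)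
          ∂((μ 0).prod (Measure.pi fun j => μ (Fin.succAbove 0 j)))
        = (∫⁻ x, g 0 x ∂μ 0) *
            ∫⁻ y : Fin m → γ, ∏ i : Fin m, g (Fin.succAbove 0 i) (y i)
              ∂(Measure.pi fun j => μ (Fin.succAbove 0 j)) :=
      lintegral_prod_mul (hg 0).aemeasurable
        ((Finset.measurable_prod Finset.univ
          (fun i _ => (hg _).comp (measurable_pi_apply i))).aemeasurable)
    rw [h1, h2, ih (fun j => μ (Fin.succAbove 0 j)) (fun j => hμ _)
      (fun i => g (Fin.succAbove 0 i)) (fun i => hg _)]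
    rw [Fin.prod_univ_succAbove (fun i => ∫⁻ x, g i x ∂μ i) 0]

/-- pairing of two pi measures is the pi measure of the products -/
lemma aux_map_pair_pi {m : ℕ} (μ ν : Fin m → Measure γ)
    [∀ i, IsProbabilityMeasure (μ i)] [∀ i, IsProbabilityMeasure (ν i)] :
    Measure.map (fun p : (Fin m → γ) × (Fin m → γ) => fun k => (p.1 k, p.2 k))
      ((Measure.pi μ).prod (Measure.pi ν)) = Measure.pi (fun k => (μ k).prod (ν k)) := by
  have hpair : Measurable (fun p : (Fin m → γ) × (Fin m → γ) => fun k => (p.1 k, p.2 k)) :=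
    measurable_pi_lambda _ (fun k =>
      ((measurable_pi_apply k).comp measurable_fst).prodMk
        ((measurable_pi_apply k).comp measurable_snd))
  refine (Measure.pi_eq fun s hs => ?_).symm
  rw [Measure.map_apply hpair (MeasurableSet.univ_pi hs)]
  have hpre : MeasurableSet ((fun p : (Fin m → γ) × (Fin m → γ) => fun k => (p.1 k, p.2 k)) ⁻¹'
      Set.univ.pi s) := hpair (MeasurableSet.univ_pi hs)
  rw [Measure.prod_apply hpre]
  have hslice : ∀ a : Fin m → γ,
      (Prod.mk a ⁻¹' ((fun p : (Fin m → γ) × (Fin m → γ) => fun k => (p.1 k, p.2 k)) ⁻¹'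
        Set.univ.pi s)) = Set.univ.pi (fun k => (fun y => (a k, y)) ⁻¹' (s k)) := by
    intro a
    ext b
    simp [Set.mem_pi]
  have hcalc : ∀ a : Fin m → γ,
      (Measure.pi ν) (Prod.mk a ⁻¹' ((fun p : (Fin m → γ) × (Fin m → γ) =>
        fun k => (p.1 k, p.2 k)) ⁻¹' Set.univ.pi s)) = ∏ k, (ν k) (Prod.mk (a k) ⁻¹' s k) := by
    intro a
    rw [hslice a, Measure.pi_pi]
  simp_rw [hcalc]
  rw [aux_lintegral_pi_prod m μ inferInstance (fun k x => (ν k) (Prod.mk x ⁻¹' s k))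
    (fun k => measurable_measure_prodMk_left (hs k))]
  exact Finset.prod_congr rfl (fun k _ => (Measure.prod_apply (hs k)).symm)

/-- The symmetric step: for independent symmetric integrable random variables (canonical form),
`E[max_k |x k|] ≤ E[|∑ x k|]`. -/
lemma aux_sym_step {m : ℕ} (lam : Fin (m+1) → Measure ℝ) [∀ k, IsProbabilityMeasure (lam k)]
    (hsymm : ∀ k, Measure.map (fun y : ℝ => -y) (lam k) = lam k)
    (hid : ∀ k, Integrable id (lam k)) :
    ∫ x, Finset.univ.sup' Finset.univ_nonempty (fun k => |x k|) ∂Measure.pi lam ≤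
      ∫ x, |∑ k, x k| ∂Measure.pi lam := by
  classical
  set ρ := Measure.pi lam with hρdef
  haveI : IsProbabilityMeasure ρ := by rw [hρdef]; infer_instance
  set T : (Fin (m+1) → ℝ) → ℝ := fun x => ∑ k, x k with hT
  set M : (Fin (m+1) → ℝ) → ℝ := fun x =>
    Finset.univ.sup' Finset.univ_nonempty (fun k => |x k|) with hM
  have hcoord : ∀ k, Integrable (fun x : Fin (m+1) → ℝ => x k) ρ := by
    intro k
    exact aux_integrable_comp_of_map (measurable_pi_apply k) (aux_map_eval_pi lam k)
      aestronglyMeasurable_id (hid k)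
  have hT_int : Integrable T ρ := integrable_finset_sum Finset.univ (fun k _ => hcoord k)
  have hT_meas : Measurable T := Finset.measurable_sum Finset.univ (fun k _ => measurable_pi_apply k)
  have hTabs_int : Integrable (fun x => |T x|) ρ := hT_int.abs
  have hM_meas : Measurable M := by
    have := Finset.measurable_sup' (Finset.univ_nonempty : (Finset.univ : Finset (Fin (m+1))).Nonempty)
      (f := fun k (x : Fin (m+1) → ℝ) => |x k|) (fun k _ => (measurable_pi_apply k).abs)
    have heq : M = Finset.univ.sup' Finset.univ_nonempty (fun k (x : Fin (m+1) → ℝ) => |x k|) := by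
      funext x
      rw [hM, Finset.sup'_apply]
    rw [heq]
    exact this
  have hM_nonneg : ∀ x, 0 ≤ M x := by
    intro x
    exact le_trans (abs_nonneg (x 0)) (Finset.le_sup' (fun k : Fin (m+1) => |x k|) (Finset.mem_univ (0 : Fin (m+1))))
  have hM_int : Integrable M ρ := by
    refine Integrable.mono' (g := fun x => ∑ k, |x k|)
      (integrable_finset_sum Finset.univ (fun k _ => (hcoord k).abs))
      hM_meas.aestronglyMeasurable ?_
    refine Filter.Eventually.of_forall fun x => ?_
    rw [Real.norm_eq_abs, abs_of_nonneg (hM_nonneg x)]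
    refine Finset.sup'_le _ _ fun k _ => ?_
    exact Finset.single_le_sum (f := fun k => |x k|) (fun j _ => abs_nonneg _) (Finset.mem_univ k)
  -- argmax partition
  set A : Fin (m+1) → Set (Fin (m+1) → ℝ) := fun k =>
    {x | ∀ j, |x j| ≤ |x k|} ∩ {x | ∀ j, j < k → |x j| < |x k|} with hA
  have hAmeas : ∀ k, MeasurableSet (A k) := by
    intro k
    apply MeasurableSet.inter
    · rw [Set.setOf_forall]
      exact MeasurableSet.iInter fun j =>
        measurableSet_le (measurable_pi_apply j).abs (measurable_pi_apply k).abs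
    · rw [Set.setOf_forall]
      refine MeasurableSet.iInter fun j => ?_
      by_cases hj : j < k
      · have : {x : Fin (m+1) → ℝ | j < k → |x j| < |x k|} = {x | |x j| < |x k|} := by
          ext x; simp [hj]
        rw [this]
        exact measurableSet_lt (measurable_pi_apply j).abs (measurable_pi_apply k).abs
      · have : {x : Fin (m+1) → ℝ | j < k → |x j| < |x k|} = Set.univ := by
          ext x; simp [hj]
        rw [this]
        exact MeasurableSet.univ
  have hcover : ∀ x, ∃ k, x ∈ A k := by
    intro x
    set s : Finset (Fin (m+1)) := Finset.univ.filter (fun k => ∀ j, |x j| ≤ |x k|) with hs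
    have hsne : s.Nonempty := by
      obtain ⟨k0, -, hk0⟩ := Finset.exists_mem_eq_sup' (Finset.univ_nonempty : (Finset.univ : Finset (Fin (m+1))).Nonempty)
        (fun k => |x k|)
      refine ⟨k0, Finset.mem_filter.mpr ⟨Finset.mem_univ _, fun j => ?_⟩⟩
      rw [← hk0]
      exact Finset.le_sup' (fun k : Fin (m+1) => |x k|) (Finset.mem_univ j)
    have hmin := s.min'_mem hsne
    have hminmax : ∀ j, |x j| ≤ |x (s.min' hsne)| := (Finset.mem_filter.mp hmin).2
    refine ⟨s.min' hsne, hminmax, ?_⟩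
    intro j hj
    by_contra hle
    push_neg at hle
    have hjs : j ∈ s := Finset.mem_filter.mpr
      ⟨Finset.mem_univ _, fun i => le_trans (hminmax i) hle⟩
    exact absurd (Finset.min'_le s j hjs) (not_le.mpr hj)
  have hdisj : ((Finset.univ : Finset (Fin (m+1))) : Set (Fin (m+1))).Pairwise (Function.onFun Disjoint A) := by
    intro k _ l _ hkl
    rw [Function.onFun]
    rw [Set.disjoint_left]
    intro x hxk hxl
    rcases lt_or_gt_of_ne hkl with h | h
    · exact absurd (hxl.2 k h) (not_lt.mpr (hxk.1 l))
    · exact absurd (hxk.2 l h) (not_lt.mpr (hxl.1 k))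
  have hdecomp : ∀ (f : (Fin (m+1) → ℝ) → ℝ), Integrable f ρ →
      ∫ x, f x ∂ρ = ∑ k, ∫ x in A k, f x ∂ρ := by
    intro f hf
    have hU : (⋃ k ∈ (Finset.univ : Finset (Fin (m+1))), A k) = Set.univ := by
      ext x
      simp only [Set.mem_iUnion, Set.mem_univ, iff_true, Finset.mem_univ, exists_prop,
        true_and]
      obtain ⟨k, hk⟩ := hcover x
      exact ⟨k, hk⟩
    rw [← setIntegral_univ, ← hU,
      integral_biUnion_finset Finset.univ (fun k _ => hAmeas k) hdisj
        (fun k _ => hf.integrableOn)]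
  have hMk : ∀ k, ∫ x in A k, M x ∂ρ = ∫ x in A k, |x k| ∂ρ := by
    intro k
    refine setIntegral_congr_fun (hAmeas k) fun x hx => ?_
    exact le_antisymm (Finset.sup'_le _ _ fun j _ => hx.1 j)
      (Finset.le_sup' (fun j : Fin (m+1) => |x j|) (Finset.mem_univ k))
  have hkey : ∀ k, ∫ x in A k, |x k| ∂ρ ≤ ∫ x in A k, |T x| ∂ρ := by
    intro k
    set f : Fin (m+1) → ℝ → ℝ := fun j => if j = k then (fun y => -y) else id with hf
    have hfm : ∀ j, MeasurePreserving (f j) (lam j) (lam j) := by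
      intro j
      by_cases hj : j = k
      · subst hj
        simp only [hf, if_pos rfl]
        exact ⟨measurable_neg, hsymm j⟩
      · simp only [hf, if_neg hj]
        exact MeasurePreserving.id _
    have hφ : MeasurePreserving (fun x : Fin (m+1) → ℝ => fun j => f j (x j)) ρ ρ :=
      measurePreserving_pi lam lam hfm
    set φ : (Fin (m+1) → ℝ) → (Fin (m+1) → ℝ) := fun x => fun j => f j (x j) with hφdef
    have hφabs : ∀ x j, |φ x j| = |x j| := by
      intro x j
      by_cases hj : j = k <;> simp [hφdef, hf, hj, abs_neg]
    have hφA : ∀ x, φ x ∈ A k ↔ x ∈ A k := by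
      intro x
      simp only [hA, Set.mem_inter_iff, Set.mem_setOf_eq, hφabs]
    have hTφ : ∀ x, T (φ x) = T x - 2 * x k := by
      intro x
      have hterm : ∀ j : Fin (m+1), f j (x j) = x j - (if j = k then 2 * x k else 0) := by
        intro j
        by_cases hj : j = k
        · subst hj; simp [hf]; ring
        · simp [hf, hj]
      calc T (φ x) = ∑ j, (x j - (if j = k then 2 * x k else 0)) := by
            rw [hT]
            exact Finset.sum_congr rfl fun j _ => hterm j
        _ = T x - 2 * x k := by
            rw [Finset.sum_sub_distrib, Finset.sum_ite_eq' Finset.univ k (fun _ => 2 * x k)]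
            simp [hT]
    have hint2 : Integrable (fun x : Fin (m+1) → ℝ => |T x - 2 * x k|) ρ :=
      (hT_int.sub ((hcoord k).const_mul 2)).abs
    have hswap : ∫ x in A k, |T x| ∂ρ = ∫ x in A k, |T x - 2 * x k| ∂ρ := by
      rw [← integral_indicator (hAmeas k), ← integral_indicator (hAmeas k)]
      have hindmeas : Measurable ((A k).indicator (fun y => |T y|)) :=
        (hT_meas.abs).indicator (hAmeas k)
      have hmapeq : ∫ x, (A k).indicator (fun y => |T y|) x ∂ρ =
          ∫ x, (A k).indicator (fun y => |T y|) (φ x) ∂ρ := by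
        conv_lhs => rw [← hφ.map_eq]
        exact integral_map hφ.measurable.aemeasurable
          (by rw [hφ.map_eq]; exact hindmeas.aestronglyMeasurable)
      rw [hmapeq]
      refine integral_congr_ae (Filter.Eventually.of_forall fun x => ?_)
      by_cases hx : x ∈ A k
      · have h1 : φ x ∈ A k := (hφA x).mpr hx
        simp only [Set.indicator_of_mem h1, Set.indicator_of_mem hx, hTφ]
      · have h1 : φ x ∉ A k := fun h => hx ((hφA x).mp h)
        simp only [Set.indicator_of_notMem h1, Set.indicator_of_notMem hx]
    have hptw : ∀ x ∈ A k, 2 * |x k| ≤ |T x| + |T x - 2 * x k| := by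
      intro x _
      have h1 : |T x - (T x - 2 * x k)| ≤ |T x| + |T x - 2 * x k| := abs_sub _ _
      have h2 : T x - (T x - 2 * x k) = 2 * x k := by ring
      rw [h2] at h1
      calc 2 * |x k| = |2 * x k| := by rw [abs_mul]; simp
        _ ≤ _ := h1
    have h2 : 2 * ∫ x in A k, |x k| ∂ρ ≤
        ∫ x in A k, |T x| ∂ρ + ∫ x in A k, |T x - 2 * x k| ∂ρ := by
      rw [← integral_add (hTabs_int.integrableOn) (hint2.integrableOn),
        ← integral_const_mul]
      exact setIntegral_mono_on (((hcoord k).abs.const_mul 2).integrableOn)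
        ((hTabs_int.integrableOn).add (hint2.integrableOn)) (hAmeas k) hptw
    rw [← hswap] at h2
    linarith
  calc ∫ x, M x ∂ρ = ∑ k, ∫ x in A k, M x ∂ρ := hdecomp M hM_int
    _ = ∑ k, ∫ x in A k, |x k| ∂ρ := Finset.sum_congr rfl fun k _ => hMk k
    _ ≤ ∑ k, ∫ x in A k, |T x| ∂ρ := Finset.sum_le_sum fun k _ => hkey k
    _ = ∫ x, |T x| ∂ρ := (hdecomp _ hTabs_int).symm

end Aux

/-- If `Y₀, ..., Y_n` are independent integrable mean-zero random variables, then
`E[max_k |Y_k|] ≤ 4 E[|∑_k Y_k|]`. -/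
theorem stmt_13 {Ω : Type*} [MeasureSpace Ω] [IsProbabilityMeasure (volume : Measure Ω)]
    (n : ℕ) (Y : Fin (n + 1) → Ω → ℝ)
    (hmeas : ∀ i, Measurable (Y i))
    (hint : ∀ i, Integrable (Y i) volume)
    (hmean : ∀ i, ∫ ω, Y i ω = 0)
    (hindep : iIndepFun Y volume) :
    ∫ ω, Finset.univ.sup' Finset.univ_nonempty (fun k => |Y k ω|) ≤
      4 * ∫ ω, |∑ k, Y k ω| := by
   classical
  set μ : Fin (n+1) → Measure ℝ := fun k => Measure.map (Y k) (volume : Measure Ω) with hμdef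
  haveI hμprob : ∀ k, IsProbabilityMeasure (μ k) :=
    fun k => Measure.isProbabilityMeasure_map (hmeas k).aemeasurable
  set π : Measure (Fin (n+1) → ℝ) := Measure.pi μ with hπ
  set P2 : Measure (Ω × Ω) := (volume : Measure Ω).prod volume with hP2
  haveI : IsProbabilityMeasure P2 := by rw [hP2]; infer_instance
  have hmapfst : Measure.map Prod.fst P2 = (volume : Measure Ω) := by
    rw [hP2, Measure.map_fst_prod]; simp
  have hmapsnd : Measure.map Prod.snd P2 = (volume : Measure Ω) := by
    rw [hP2, Measure.map_snd_prod]; simp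
  have hfstInt : ∀ (f : Ω → ℝ), Measurable f → Integrable f volume →
      Integrable (fun p : Ω × Ω => f p.1) P2 :=
    fun f hfm hfi => aux_integrable_comp_of_map measurable_fst hmapfst
      hfm.aestronglyMeasurable hfi
  have hsndInt : ∀ (f : Ω → ℝ), Measurable f → Integrable f volume →
      Integrable (fun p : Ω × Ω => f p.2) P2 :=
    fun f hfm hfi => aux_integrable_comp_of_map measurable_snd hmapsnd
      hfm.aestronglyMeasurable hfi
  -- the symmetrized function on Ω × Ω
  set G : Ω × Ω → ℝ := fun p =>
    Finset.univ.sup' Finset.univ_nonempty (fun k => |Y k p.1 - Y k p.2|) with hG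
  have hGmeas : Measurable G := by
    have h := Finset.measurable_sup'
      (Finset.univ_nonempty : (Finset.univ : Finset (Fin (n+1))).Nonempty)
      (f := fun k (p : Ω × Ω) => |Y k p.1 - Y k p.2|)
      (fun k _ => (((hmeas k).comp measurable_fst).sub ((hmeas k).comp measurable_snd)).abs)
    have heq : G = Finset.univ.sup' Finset.univ_nonempty
        (fun k (p : Ω × Ω) => |Y k p.1 - Y k p.2|) := by
      funext p
      rw [hG]
      exact (Finset.sup'_apply Finset.univ_nonempty
        (fun k (p : Ω × Ω) => |Y k p.1 - Y k p.2|) p).symm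
    rw [heq]
    exact h
  have hGnonneg : ∀ p, 0 ≤ G p := fun p => le_trans (abs_nonneg _)
    (Finset.le_sup' (fun k : Fin (n+1) => |Y k p.1 - Y k p.2|) (Finset.mem_univ 0))
  have hGle : ∀ p : Ω × Ω, G p ≤ ∑ k, (|Y k p.1| + |Y k p.2|) := by
    intro p
    refine Finset.sup'_le _ _ fun k _ => ?_
    refine le_trans (abs_sub _ _) ?_
    exact Finset.single_le_sum (f := fun k : Fin (n+1) => |Y k p.1| + |Y k p.2|)
      (fun j _ => add_nonneg (abs_nonneg _) (abs_nonneg _)) (Finset.mem_univ k)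
  have hGint : Integrable G P2 := by
    refine Integrable.mono' (g := fun p : Ω × Ω => ∑ k, (|Y k p.1| + |Y k p.2|))
      (integrable_finset_sum _ fun k _ =>
        ((hfstInt _ (hmeas k) (hint k)).abs.add (hsndInt _ (hmeas k) (hint k)).abs))
      hGmeas.aestronglyMeasurable ?_
    refine Filter.Eventually.of_forall fun p => ?_
    rw [Real.norm_eq_abs, abs_of_nonneg (hGnonneg p)]
    exact hGle p
  -- Step 1: Jensen / symmetrization inequality
  have hpoint : ∀ ω : Ω, (Finset.univ.sup' Finset.univ_nonempty (fun k => |Y k ω|)) ≤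
      ∫ ω', G (ω, ω') := by
    intro ω
    have hsecMeas : Measurable (fun ω' : Ω => G (ω, ω')) :=
      hGmeas.comp (measurable_const.prodMk measurable_id)
    have hsecInt : Integrable (fun ω' : Ω => G (ω, ω')) volume := by
      refine Integrable.mono' (g := fun ω' => ∑ k, (|Y k ω| + |Y k ω'|))
        (integrable_finset_sum _ fun k _ => (integrable_const _).add (hint k).abs)
        hsecMeas.aestronglyMeasurable ?_
      refine Filter.Eventually.of_forall fun ω' => ?_
      rw [Real.norm_eq_abs, abs_of_nonneg (hGnonneg (ω, ω'))]
      exact hGle (ω, ω')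
    refine Finset.sup'_le _ _ fun k _ => ?_
    have h0 : ∫ ω', (Y k ω - Y k ω') = Y k ω := by
      rw [integral_sub (integrable_const _) (hint k), integral_const, hmean k]
      simp
    have h1 : |Y k ω| ≤ ∫ ω', |Y k ω - Y k ω'| := by
      have habs : |Y k ω| = |∫ ω', (Y k ω - Y k ω')| := congrArg abs h0.symm
      rw [habs]
      have h1' := norm_integral_le_integral_norm (μ := (volume : Measure Ω))
        (fun ω' => Y k ω - Y k ω')
      simpa only [Real.norm_eq_abs] using h1'
    refine le_trans h1 (integral_mono ((integrable_const _).sub (hint k)).abs hsecInt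
      fun ω' => ?_)
    have h2 : |Y k ω - Y k ω'| ≤ G (ω, ω') := by
      rw [hG]
      exact Finset.le_sup' (fun j : Fin (n+1) => |Y j ω - Y j ω'|) (Finset.mem_univ k)
    exact h2
  have stepJ : ∫ ω, Finset.univ.sup' Finset.univ_nonempty (fun k => |Y k ω|) ≤
      ∫ p, G p ∂P2 := by
    calc ∫ ω, Finset.univ.sup' Finset.univ_nonempty (fun k => |Y k ω|)
        ≤ ∫ ω, ∫ ω', G (ω, ω') := by
          refine integral_mono_of_nonneg (Filter.Eventually.of_forall fun ω =>
            le_trans (abs_nonneg (Y 0 ω)) (Finset.le_sup'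
              (fun k : Fin (n+1) => |Y k ω|) (Finset.mem_univ 0)))
            hGint.integral_prod_left (Filter.Eventually.of_forall hpoint)
      _ = ∫ p, G p ∂P2 := (integral_prod _ hGint).symm
  -- joint law is the product measure
  have hJmeas : Measurable (fun ω (k : Fin (n+1)) => Y k ω) := measurable_pi_lambda _ hmeas
  have hJoint : Measure.map (fun ω (k : Fin (n+1)) => Y k ω) (volume : Measure Ω) = π := by
    rw [hπ]
    refine (Measure.pi_eq fun s hs => ?_).symm
    rw [Measure.map_apply hJmeas (MeasurableSet.univ_pi hs)]
    have hpre : (fun ω (k : Fin (n+1)) => Y k ω) ⁻¹' Set.univ.pi s =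
        ⋂ k ∈ (Finset.univ : Finset (Fin (n+1))), Y k ⁻¹' s k := by
      ext ω
      simp [Set.mem_pi]
    rw [hpre, hindep.measure_inter_preimage_eq_mul Finset.univ (fun i _ => hs i)]
    exact Finset.prod_congr rfl fun k _ => (Measure.map_apply (hmeas k) (hs k)).symm
  -- symmetrized one-dimensional laws
  have hsubmeas : Measurable (fun x : ℝ × ℝ => x.1 - x.2) := measurable_fst.sub measurable_snd
  set lam : Fin (n+1) → Measure ℝ :=
    fun k => Measure.map (fun x : ℝ × ℝ => x.1 - x.2) ((μ k).prod (μ k)) with hlam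
  haveI : ∀ k, IsProbabilityMeasure ((μ k).prod (μ k)) := fun k => by infer_instance
  haveI hlamprob : ∀ k, IsProbabilityMeasure (lam k) := by
    intro k
    rw [hlam]
    exact Measure.isProbabilityMeasure_map hsubmeas.aemeasurable
  have hlamsymm : ∀ k, Measure.map (fun y : ℝ => -y) (lam k) = lam k := by
    intro k
    rw [hlam]
    rw [Measure.map_map measurable_neg hsubmeas]
    have hco : (fun y : ℝ => -y) ∘ (fun x : ℝ × ℝ => x.1 - x.2) =
        (fun x : ℝ × ℝ => x.1 - x.2) ∘ Prod.swap := by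
      funext x
      simp [neg_sub]
    rw [hco, ← Measure.map_map hsubmeas measurable_swap, Measure.prod_swap]
  have hidμ : ∀ k, Integrable id (μ k) := by
    intro k
    rw [hμdef]
    exact (integrable_map_measure aestronglyMeasurable_id (hmeas k).aemeasurable).mpr
      (by simpa [Function.comp] using hint k)
  have hmapfstμ : ∀ k, Measure.map Prod.fst ((μ k).prod (μ k)) = μ k := fun k => by
    rw [Measure.map_fst_prod]; simp
  have hmapsndμ : ∀ k, Measure.map Prod.snd ((μ k).prod (μ k)) = μ k := fun k => by
    rw [Measure.map_snd_prod]; simp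
  have hlamid : ∀ k, Integrable id (lam k) := by
    intro k
    rw [hlam]
    refine (integrable_map_measure aestronglyMeasurable_id hsubmeas.aemeasurable).mpr ?_
    have h1 : Integrable (fun x : ℝ × ℝ => x.1) ((μ k).prod (μ k)) :=
      aux_integrable_comp_of_map measurable_fst (hmapfstμ k) aestronglyMeasurable_id (hidμ k)
    have h2 : Integrable (fun x : ℝ × ℝ => x.2) ((μ k).prod (μ k)) :=
      aux_integrable_comp_of_map measurable_snd (hmapsndμ k) aestronglyMeasurable_id (hidμ k)
    exact h1.sub h2
  set ρ : Measure (Fin (n+1) → ℝ) := Measure.pi lam with hρ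
  haveI : IsProbabilityMeasure ρ := by rw [hρ]; infer_instance
  -- law of the symmetrized vector
  set Zmap : Ω × Ω → (Fin (n+1) → ℝ) := fun p k => Y k p.1 - Y k p.2 with hZ
  have hZmeas : Measurable Zmap := measurable_pi_lambda _
    (fun k => ((hmeas k).comp measurable_fst).sub ((hmeas k).comp measurable_snd))
  have hpairmeas : Measurable (fun p : (Fin (n+1) → ℝ) × (Fin (n+1) → ℝ) =>
      fun k => (p.1 k, p.2 k)) := measurable_pi_lambda _
    (fun k => ((measurable_pi_apply k).comp measurable_fst).prodMk
      ((measurable_pi_apply k).comp measurable_snd))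
  have hsubpi_meas : Measurable (fun c : Fin (n+1) → ℝ × ℝ => fun k => (c k).1 - (c k).2) :=
    measurable_pi_lambda _ (fun k => (measurable_fst.comp (measurable_pi_apply k)).sub
      (measurable_snd.comp (measurable_pi_apply k)))
  have hZlaw : Measure.map Zmap P2 = ρ := by
    have hc1 : Measure.map (Prod.map (fun ω (k : Fin (n+1)) => Y k ω)
        (fun ω (k : Fin (n+1)) => Y k ω)) P2 = π.prod π := by
      rw [hP2, ← Measure.map_prod_map _ _ hJmeas hJmeas, hJoint]
    have hc2 : Measure.map (fun p : (Fin (n+1) → ℝ) × (Fin (n+1) → ℝ) =>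
        fun k => (p.1 k, p.2 k)) (π.prod π) = Measure.pi (fun k => (μ k).prod (μ k)) := by
      rw [hπ]
      exact aux_map_pair_pi μ μ
    have hc3 : Measure.map (fun c : Fin (n+1) → ℝ × ℝ => fun k => (c k).1 - (c k).2)
        (Measure.pi (fun k => (μ k).prod (μ k))) = ρ := by
      rw [hρ]
      refine (measurePreserving_pi (fun k => (μ k).prod (μ k)) lam
        (fun k => ⟨hsubmeas, ?_⟩)).map_eq
      rw [hlam]
    have hcomp : Zmap = (fun c : Fin (n+1) → ℝ × ℝ => fun k => (c k).1 - (c k).2) ∘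
        ((fun p : (Fin (n+1) → ℝ) × (Fin (n+1) → ℝ) => fun k => (p.1 k, p.2 k)) ∘
          (Prod.map (fun ω (k : Fin (n+1)) => Y k ω) (fun ω (k : Fin (n+1)) => Y k ω))) := rfl
    rw [hcomp, ← Measure.map_map hsubpi_meas (hpairmeas.comp (hJmeas.prodMap hJmeas)),
      ← Measure.map_map hpairmeas (hJmeas.prodMap hJmeas), hc1, hc2, hc3]
  -- transfer the two integrals to the canonical space
  have hMx_meas : Measurable (fun x : Fin (n+1) → ℝ =>
      Finset.univ.sup' Finset.univ_nonempty (fun k => |x k|)) := by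
    have h := Finset.measurable_sup'
      (Finset.univ_nonempty : (Finset.univ : Finset (Fin (n+1))).Nonempty)
      (f := fun k (x : Fin (n+1) → ℝ) => |x k|) (fun k _ => (measurable_pi_apply k).abs)
    have heq : (fun x : Fin (n+1) → ℝ =>
        Finset.univ.sup' Finset.univ_nonempty (fun k => |x k|)) =
        Finset.univ.sup' Finset.univ_nonempty (fun k (x : Fin (n+1) → ℝ) => |x k|) := by
      funext x
      exact (Finset.sup'_apply Finset.univ_nonempty
        (fun k (x : Fin (n+1) → ℝ) => |x k|) x).symm
    rw [heq]
    exact h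
  have hTx_meas : Measurable (fun x : Fin (n+1) → ℝ => |∑ k, x k|) :=
    (Finset.measurable_sum _ fun k _ => measurable_pi_apply k).abs
  have hGtrans : ∫ p, G p ∂P2 = ∫ x, Finset.univ.sup' Finset.univ_nonempty
      (fun k => |x k|) ∂ρ :=
    aux_integral_comp_of_map hZmeas hZlaw hMx_meas.aestronglyMeasurable
  have hTtrans : ∫ p, |∑ k, (Y k p.1 - Y k p.2)| ∂P2 = ∫ x, |∑ k, x k| ∂ρ :=
    aux_integral_comp_of_map hZmeas hZlaw hTx_meas.aestronglyMeasurable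
  -- the symmetric step
  have hsym : ∫ x, Finset.univ.sup' Finset.univ_nonempty (fun k => |x k|) ∂ρ ≤
      ∫ x, |∑ k, x k| ∂ρ := by
    rw [hρ]
    exact aux_sym_step lam hlamsymm hlamid
  -- bound the symmetrized sum
  set S : Ω → ℝ := fun ω => ∑ k, Y k ω with hS
  have hSint : Integrable S volume := integrable_finset_sum _ fun k _ => hint k
  have hSmeas : Measurable S := Finset.measurable_sum _ fun k _ => hmeas k
  have hsplit : ∀ p : Ω × Ω, |∑ k, (Y k p.1 - Y k p.2)| = |S p.1 - S p.2| := by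
    intro p
    rw [hS, Finset.sum_sub_distrib]
  have hint1 : Integrable (fun p : Ω × Ω => |S p.1|) P2 := (hfstInt S hSmeas hSint).abs
  have hint2 : Integrable (fun p : Ω × Ω => |S p.2|) P2 := (hsndInt S hSmeas hSint).abs
  have h3 : ∫ p, |S p.1| ∂P2 = ∫ ω, |S ω| :=
    aux_integral_comp_of_map measurable_fst hmapfst (hSmeas.abs).aestronglyMeasurable
  have h4 : ∫ p, |S p.2| ∂P2 = ∫ ω, |S ω| :=
    aux_integral_comp_of_map measurable_snd hmapsnd (hSmeas.abs).aestronglyMeasurable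
  have hbound : ∫ p, |S p.1 - S p.2| ∂P2 ≤ 2 * ∫ ω, |S ω| := by
    have h1 : ∫ p, |S p.1 - S p.2| ∂P2 ≤ ∫ p, (|S p.1| + |S p.2|) ∂P2 :=
      integral_mono ((hfstInt S hSmeas hSint).sub (hsndInt S hSmeas hSint)).abs
        (hint1.add hint2) (fun p => abs_sub _ _)
    have h2 : ∫ p, (|S p.1| + |S p.2|) ∂P2 = ∫ p, |S p.1| ∂P2 + ∫ p, |S p.2| ∂P2 :=
      integral_add hint1 hint2
    rw [h2, h3, h4] at h1
    linarith
  have hSeq : ∫ ω, |S ω| = ∫ ω, |∑ k, Y k ω| := rfl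
  have hnn : 0 ≤ ∫ ω, |∑ k, Y k ω| := integral_nonneg fun ω => abs_nonneg _
  calc ∫ ω, Finset.univ.sup' Finset.univ_nonempty (fun k => |Y k ω|)
      ≤ ∫ p, G p ∂P2 := stepJ
    _ = ∫ x, Finset.univ.sup' Finset.univ_nonempty (fun k => |x k|) ∂ρ := hGtrans
    _ ≤ ∫ x, |∑ k, x k| ∂ρ := hsym
    _ = ∫ p, |∑ k, (Y k p.1 - Y k p.2)| ∂P2 := hTtrans.symm
    _ = ∫ p, |S p.1 - S p.2| ∂P2 := integral_congr_ae (Filter.Eventually.of_forall hsplit)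
    _ ≤ 2 * ∫ ω, |S ω| := hbound
    _ ≤ 4 * ∫ ω, |∑ k, Y k ω| := by rw [hSeq]; linarith
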